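/- In any stable matching M of the extended instance I'_{3,3}(B), every hospital y_{4i+r} (0≤i≤n−1, 0≤r≤3) is matched in M to a resident belonging to the set X = {x_{4i+r}}. -/

import Mathlib

/-- A one-to-one HRC instance: residents are partitioned into single residents and
ordered couples; all hospitals have capacity 1. -/
structure HRC1 (R H : Type) where
  singles : List R
  couples : List (R × R)
  singlePref : R → List H
  couplePref : R × R → List (H × H)
  hospPref : H → List R

namespace HRC1

/-- `x` precedes `y` on the strict preference list `l`. -/
def Prefers {α : Type} [DecidableEq α] (l : List α) (x y : α) : Prop :=
  x ∈ l ∧ y ∈ l ∧ l.idxOf x < l.idxOf y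

variable {R H : Type} [DecidableEq R] [DecidableEq H]

/-- `M` is a matching of the instance `I`. -/
def IsMatching (I : HRC1 R H) (M : R → Option H) : Prop :=
  (∀ r₁ r₂ h, M r₁ = some h → M r₂ = some h → r₁ = r₂) ∧
  (∀ r ∈ I.singles, ∀ h, M r = some h → h ∈ I.singlePref r) ∧
  (∀ c ∈ I.couples,
    (M c.1 = none ∧ M c.2 = none) ∨
    ∃ hp ∈ I.couplePref c, M c.1 = some hp.1 ∧ M c.2 = some hp.2) ∧
  (∀ r, (M r).isSome → r ∈ I.singles ∨ ∃ c ∈ I.couples, r = c.1 ∨ r = c.2)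

/-- Hospital `h` is unmatched in `M`. -/
def HospFree (M : R → Option H) (h : H) : Prop := ∀ r, M r ≠ some h

/-- Hospital `h` is unmatched in `M`, or prefers `r` to its current assignee. -/
def HospOpenFor (I : HRC1 R H) (M : R → Option H) (h : H) (r : R) : Prop :=
  HospFree M h ∨ ∃ r', M r' = some h ∧ Prefers (I.hospPref h) r r'

/-- Blocking pair consisting of a single resident `r` and a hospital `h`. -/
def BlockSingle (I : HRC1 R H) (M : R → Option H) (r : R) (h : H) : Prop :=
  r ∈ I.singles ∧ h ∈ I.singlePref r ∧
  (M r = none ∨ ∃ h', M r = some h' ∧ Prefers (I.singlePref r) h h') ∧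
  I.HospOpenFor M h r

/-- Blocking pair consisting of a couple `c` and a pair of hospitals `hp` on its joint list. -/
def BlockCouple (I : HRC1 R H) (M : R → Option H) (c : R × R) (hp : H × H) : Prop :=
  c ∈ I.couples ∧ hp ∈ I.couplePref c ∧
  ((M c.1 = none ∧ M c.2 = none) ∨
    ∃ hp' ∈ I.couplePref c, M c.1 = some hp'.1 ∧ M c.2 = some hp'.2 ∧
      Prefers (I.couplePref c) hp hp') ∧
  (M c.1 = some hp.1 ∨ I.HospOpenFor M hp.1 c.1) ∧
  (M c.2 = some hp.2 ∨ I.HospOpenFor M hp.2 c.2)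

/-- `M` is a stable matching of the instance `I`. -/
def Stable (I : HRC1 R H) (M : R → Option H) : Prop :=
  I.IsMatching M ∧ (∀ r h, ¬ I.BlockSingle M r h) ∧ (∀ c hp, ¬ I.BlockCouple M c hp)

end HRC1

/-- An instance of (2,2)-E3-SAT: `m` clauses, each with exactly 3 literals over `n`
variables (a literal is a variable together with a polarity, `true` for positive);
`occ l` enumerates the two occurrences of the literal `l`, so that each of the literals
`vᵢ` and `¬vᵢ` appears exactly twice. -/
structure E3SAT (n m : ℕ) where
  clause : Fin m → Fin 3 → Fin n × Bool
  occ : Fin n × Bool → Fin 2 → Fin m × Fin 3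
  occ_spec : ∀ l r, clause (occ l r).1 (occ l r).2 = l
  occ_inj : ∀ l, occ l 0 ≠ occ l 1
  occ_surj : ∀ j s, ∃ r, occ (clause j s) r = (j, s)

namespace E3SAT

variable {n m : ℕ}

/-- `B` is satisfiable. -/
def Satisfiable (B : E3SAT n m) : Prop :=
  ∃ f : Fin n → Bool, ∀ j : Fin m, ∃ s : Fin 3, f (B.clause j s).1 = (B.clause j s).2

/-- The index (`0` or `1`) of the occurrence of its literal that position `s` of
clause `j` constitutes. -/
def rIdx (B : E3SAT n m) (j : Fin m) (s : Fin 3) : Fin 2 :=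
  if B.occ (B.clause j s) 0 = (j, s) then 0 else 1

end E3SAT

/-- Residents of the extended instance `I′₃₃(B)`: `X i r = x_{4i+r}`, `K i r = k_{4i+r}`,
`P j s = p_j^{s+1}`, `Q j = q_{j+1}`, `T j = t_{j+1}`, `U i r s = u^{s+1}_{4i+r}`
(0-based indices). -/
inductive Res3E (n m : ℕ)
  | X (i : Fin n) (r : Fin 4)
  | K (i : Fin n) (r : Fin 4)
  | P (j : Fin m) (s : Fin 6)
  | Q (j : Fin m)
  | T (j : Fin m)
  | U (i : Fin n) (r : Fin 4) (s : Fin 5)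
deriving DecidableEq

/-- Hospitals of the extended instance `I′₃₃(B)`: `Y i r = y_{4i+r}`, `L i r = l_{4i+r}`,
`C j s = c_j^{s+1}`, `Z j r = z_j^{r+1}`, `Hh i r s = h^{s+1}_{4i+r}` (0-based indices). -/
inductive Hos3E (n m : ℕ)
  | Y (i : Fin n) (r : Fin 4)
  | L (i : Fin n) (r : Fin 4)
  | C (j : Fin m) (s : Fin 3)
  | Z (j : Fin m) (r : Fin 5)
  | Hh (i : Fin n) (r : Fin 4) (s : Fin 4)
deriving DecidableEq

variable {n m : ℕ}

/-- The hospital `c(x_{4i+r})`: for `r ∈ {0,1}` the clause hospital of the `(r+1)`-th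
occurrence of `vᵢ`; for `r ∈ {2,3}` that of the `(r−1)`-th occurrence of `¬vᵢ`. -/
def cX (B : E3SAT n m) (i : Fin n) (r : Fin 4) : Hos3E n m :=
  have hr := r.isLt
  let o := B.occ (i, decide (r.val < 2)) ⟨r.val % 2, by omega⟩
  Hos3E.C o.1 o.2

/-- The resident `x(c_j^{s+1})` corresponding to the literal at position `s` of
clause `c_j`. -/
def xOfC (B : E3SAT n m) (j : Fin m) (s : Fin 3) : Res3E n m :=
  let l := B.clause j s
  have hv : (B.rIdx j s).val < 2 := (B.rIdx j s).isLt
  if l.2 then Res3E.X l.1 ⟨(B.rIdx j s).val, by omega⟩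
  else Res3E.X l.1 ⟨(B.rIdx j s).val + 2, by omega⟩

/-- The extended one-to-one HRC instance `I′₃₃(B)` constructed from the
(2,2)-E3-SAT instance `B`. -/
def instI33E (B : E3SAT n m) : HRC1 (Res3E n m) (Hos3E n m) where
  singles :=
    ((List.finRange m).map fun j => Res3E.Q j) ++
    ((List.finRange m).map fun j => Res3E.T j) ++
    ((List.finRange n).flatMap fun i =>
      (List.finRange 4).map fun r => Res3E.U i r 4)
  couples :=
    ((List.finRange n).flatMap fun i =>
      (List.finRange 4).map fun r => (Res3E.X i r, Res3E.K i r)) ++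
    ((List.finRange m).flatMap fun j =>
      (List.finRange 3).map fun s =>
        (Res3E.P j ⟨s.val, by have := s.isLt; omega⟩,
         Res3E.P j ⟨s.val + 3, by have := s.isLt; omega⟩)) ++
    ((List.finRange n).flatMap fun i =>
      (List.finRange 4).flatMap fun r =>
        [(Res3E.U i r 0, Res3E.U i r 1), (Res3E.U i r 2, Res3E.U i r 3)])
  singlePref := fun r => match r with
    | Res3E.Q j => [Hos3E.C j 0, Hos3E.C j 1, Hos3E.C j 2]
    | Res3E.T j => [Hos3E.Z j 2, Hos3E.Z j 3, Hos3E.Z j 4]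
    | Res3E.U i r s => if s = 4 then [Hos3E.Y i r, Hos3E.Hh i r 0] else []
    | _ => []
  couplePref := fun c => match c with
    | (Res3E.X i r, Res3E.K i' r') =>
        if i' = i ∧ r' = r then
          if r = 0 then
            [(Hos3E.Y i 0, Hos3E.L i 0), (cX B i 0, Hos3E.L i 1),
             (Hos3E.Y i 1, Hos3E.L i 1)]
          else if r = 1 then
            [(Hos3E.Y i 1, Hos3E.L i 1), (cX B i 1, Hos3E.L i 2),
             (Hos3E.Y i 2, Hos3E.L i 2)]
          else if r = 2 then
            [(Hos3E.Y i 3, Hos3E.L i 3), (cX B i 2, Hos3E.L i 2),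
             (Hos3E.Y i 2, Hos3E.L i 2)]
          else
            [(Hos3E.Y i 0, Hos3E.L i 0), (cX B i 3, Hos3E.L i 3),
             (Hos3E.Y i 3, Hos3E.L i 3)]
        else []
    | (Res3E.P j s, Res3E.P j' s') =>
        if hc : j' = j ∧ s.val < 3 ∧ s'.val = s.val + 3 then
          [(Hos3E.Z j 0, Hos3E.Z j 1),
           (Hos3E.C j ⟨s.val, hc.2.1⟩, Hos3E.Z j ⟨s.val + 2, by have := hc.2.1; omega⟩)]
        else []
    | (Res3E.U i r s, Res3E.U i' r' s') =>
        if i' = i ∧ r' = r then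
          if s = 0 ∧ s' = 1 then [(Hos3E.Hh i r 0, Hos3E.Hh i r 1)]
          else if s = 2 ∧ s' = 3 then
            [(Hos3E.Hh i r 0, Hos3E.Hh i r 3), (Hos3E.Hh i r 2, Hos3E.Hh i r 1)]
          else []
        else []
    | _ => []
  hospPref := fun hh => match hh with
    | Hos3E.Y i r =>
        (if r = 0 then [Res3E.X i 0, Res3E.X i 3]
         else if r = 1 then [Res3E.X i 1, Res3E.X i 0]
         else if r = 2 then [Res3E.X i 1, Res3E.X i 2]
         else [Res3E.X i 2, Res3E.X i 3]) ++ [Res3E.U i r 4]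
    | Hos3E.L i r =>
        if r = 0 then [Res3E.K i 3, Res3E.K i 0]
        else if r = 1 then [Res3E.K i 0, Res3E.K i 1]
        else if r = 2 then [Res3E.K i 2, Res3E.K i 1]
        else [Res3E.K i 3, Res3E.K i 2]
    | Hos3E.C j s =>
        [Res3E.P j ⟨s.val, by have := s.isLt; omega⟩, xOfC B j s, Res3E.Q j]
    | Hos3E.Z j r =>
        if r = 0 then [Res3E.P j 0, Res3E.P j 1, Res3E.P j 2]
        else if r = 1 then [Res3E.P j 5, Res3E.P j 4, Res3E.P j 3]
        else if r = 2 then [Res3E.P j 3, Res3E.T j]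
        else if r = 3 then [Res3E.P j 4, Res3E.T j]
        else [Res3E.P j 5, Res3E.T j]
    | Hos3E.Hh i r s =>
        if s = 0 then [Res3E.U i r 4, Res3E.U i r 0, Res3E.U i r 2]
        else if s = 1 then [Res3E.U i r 3, Res3E.U i r 1]
        else if s = 2 then [Res3E.U i r 2]
        else [Res3E.U i r 3]

section
variable {n m : ℕ} {B : E3SAT n m} {M : Res3E n m → Option (Hos3E n m)}

lemma holder0 (hm : (instI33E B).IsMatching M) {res h} (hres : M res = some h) :
    (res ∈ (instI33E B).singles ∧ h ∈ (instI33E B).singlePref res) ∨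
    (∃ c ∈ (instI33E B).couples, ∃ hp ∈ (instI33E B).couplePref c,
      M c.1 = some hp.1 ∧ M c.2 = some hp.2 ∧
      ((res = c.1 ∧ h = hp.1) ∨ (res = c.2 ∧ h = hp.2))) := by
  obtain ⟨hinj, hsing, hcpl, hall⟩ := hm
  rcases hall res (by simp [hres]) with hs | ⟨c, hc, hor⟩
  · exact Or.inl ⟨hs, hsing res hs h hres⟩
  · rcases hcpl c hc with ⟨h1, h2⟩ | ⟨hp, hhp, h1, h2⟩
    · exfalso; rcases hor with rfl | rfl <;> simp_all
    · refine Or.inr ⟨c, hc, hp, hhp, h1, h2, ?_⟩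
      rcases hor with rfl | rfl
      · exact Or.inl ⟨rfl, by rw [hres] at h1; exact Option.some_inj.mp h1⟩
      · exact Or.inr ⟨rfl, by rw [hres] at h2; exact Option.some_inj.mp h2⟩

lemma y_holder (hm : (instI33E B).IsMatching M) {res} {i : Fin n} {r : Fin 4}
    (hres : M res = some (Hos3E.Y i r)) :
    (∃ i' r', res = Res3E.X i' r') ∨ res = Res3E.U i r 4 := by
  rcases holder0 hm hres with ⟨hs, hp⟩ | ⟨c, hc, hp, hhp, h1, h2, hor⟩
  · simp only [instI33E] at hs
    simp at hs
    rcases hs with ⟨j, rfl⟩ | ⟨j, rfl⟩ | ⟨i', r', rfl⟩ <;> simp [instI33E] at hp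
    · exact Or.inr (by rcases hp with ⟨rfl, rfl⟩; rfl)
  · simp only [instI33E] at hc
    simp at hc
    rcases hc with ⟨i', r', rfl⟩ | ⟨j, s, rfl⟩ | ⟨i', r', rfl | rfl⟩
    · fin_cases r' <;> simp [instI33E, cX] at hhp <;>
        rcases hhp with rfl | rfl | rfl <;>
        rcases hor with ⟨rfl, heq⟩ | ⟨rfl, heq⟩ <;>
        first
          | (exact Or.inl ⟨_, _, rfl⟩)
          | (exfalso; simp at heq)
    · simp [instI33E] at hhp
      rcases hhp with rfl | rfl <;>
        rcases hor with ⟨rfl, heq⟩ | ⟨rfl, heq⟩ <;> simp at heq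
    · simp [instI33E] at hhp
      subst hhp
      rcases hor with ⟨rfl, heq⟩ | ⟨rfl, heq⟩ <;> simp at heq
    · simp [instI33E] at hhp
      rcases hhp with rfl | rfl <;>
        rcases hor with ⟨rfl, heq⟩ | ⟨rfl, heq⟩ <;> simp at heq
end

section
variable {n m : ℕ} {B : E3SAT n m} {M : Res3E n m → Option (Hos3E n m)}

lemma hh_holder (hm : (instI33E B).IsMatching M) {res} {i : Fin n} {r : Fin 4} {s : Fin 4}
    (hres : M res = some (Hos3E.Hh i r s)) :
    (s = 0 ∧ res = Res3E.U i r 4) ∨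
    (s = 0 ∧ res = Res3E.U i r 0 ∧ M (Res3E.U i r 1) = some (Hos3E.Hh i r 1)) ∨
    (s = 1 ∧ res = Res3E.U i r 1 ∧ M (Res3E.U i r 0) = some (Hos3E.Hh i r 0)) ∨
    (s = 0 ∧ res = Res3E.U i r 2 ∧ M (Res3E.U i r 3) = some (Hos3E.Hh i r 3)) ∨
    (s = 3 ∧ res = Res3E.U i r 3 ∧ M (Res3E.U i r 2) = some (Hos3E.Hh i r 0)) ∨
    (s = 2 ∧ res = Res3E.U i r 2 ∧ M (Res3E.U i r 3) = some (Hos3E.Hh i r 1)) ∨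
    (s = 1 ∧ res = Res3E.U i r 3 ∧ M (Res3E.U i r 2) = some (Hos3E.Hh i r 2)) := by
  rcases holder0 hm hres with ⟨hs, hp⟩ | ⟨c, hc, hp, hhp, h1, h2, hor⟩
  · simp only [instI33E] at hs
    simp at hs
    rcases hs with ⟨j, rfl⟩ | ⟨j, rfl⟩ | ⟨i', r', rfl⟩ <;> simp [instI33E] at hp
    · obtain ⟨rfl, rfl, rfl⟩ := hp
      exact Or.inl ⟨rfl, rfl⟩
  · simp only [instI33E] at hc
    simp at hc
    rcases hc with ⟨i', r', rfl⟩ | ⟨j, s', rfl⟩ | ⟨i', r', rfl | rfl⟩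
    · exfalso
      fin_cases r' <;> simp [instI33E, cX] at hhp <;>
        rcases hhp with rfl | rfl | rfl <;>
        rcases hor with ⟨rfl, heq⟩ | ⟨rfl, heq⟩ <;> simp at heq
    · exfalso
      simp [instI33E] at hhp
      rcases hhp with rfl | rfl <;>
        rcases hor with ⟨rfl, heq⟩ | ⟨rfl, heq⟩ <;> simp at heq
    · simp [instI33E] at hhp
      subst hhp
      rcases hor with ⟨rfl, heq⟩ | ⟨rfl, heq⟩ <;>
        simp only [Hos3E.Hh.injEq] at heq <;> obtain ⟨rfl, rfl, rfl⟩ := heq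
      · exact Or.inr (Or.inl ⟨rfl, rfl, h2⟩)
      · exact Or.inr (Or.inr (Or.inl ⟨rfl, rfl, h1⟩))
    · simp [instI33E] at hhp
      rcases hhp with rfl | rfl <;>
        rcases hor with ⟨rfl, heq⟩ | ⟨rfl, heq⟩ <;>
        simp only [Hos3E.Hh.injEq] at heq <;> obtain ⟨rfl, rfl, rfl⟩ := heq
      · exact Or.inr (Or.inr (Or.inr (Or.inl ⟨rfl, rfl, h2⟩)))
      · exact Or.inr (Or.inr (Or.inr (Or.inr (Or.inl ⟨rfl, rfl, h1⟩))))
      · exact Or.inr (Or.inr (Or.inr (Or.inr (Or.inr (Or.inl ⟨rfl, rfl, h2⟩)))))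
      · exact Or.inr (Or.inr (Or.inr (Or.inr (Or.inr (Or.inr ⟨rfl, rfl, h1⟩)))))
end


/-- In any stable matching `M` of the extended instance `I′₃₃(B)`, every hospital
`y_{4i+r}` is matched in `M` to a resident belonging to `X = {x_{4i+r}}`. -/
theorem y_matched_to_X {n m : ℕ} (B : E3SAT n m)
    (M : Res3E n m → Option (Hos3E n m)) (hM : (instI33E B).Stable M) :
    ∀ (i : Fin n) (r : Fin 4), ∃ (i' : Fin n) (r' : Fin 4),
      M (Res3E.X i' r') = some (Hos3E.Y i r) := by
  obtain ⟨hm, hbs, hbc⟩ := hM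
  intro i r
  by_contra hno
  push_neg at hno
  -- Step 1: u5 = U i r 4 is matched to Y i r
  have my4 : M (Res3E.U i r 4) = some (Hos3E.Y i r) := by
    by_cases hfree : ∀ res, M res ≠ some (Hos3E.Y i r)
    · exfalso
      apply hbs (Res3E.U i r 4) (Hos3E.Y i r)
      refine ⟨by simp [instI33E], by simp [instI33E], ?_, Or.inl hfree⟩
      rcases hu4 : M (Res3E.U i r 4) with _ | h
      · exact Or.inl rfl
      · have hmem := hm.2.1 (Res3E.U i r 4) (by simp [instI33E]) h hu4
        simp [instI33E] at hmem
        rcases hmem with rfl | rfl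
        · exact absurd hu4 (hfree _)
        · exact Or.inr ⟨Hos3E.Hh i r 0, rfl,
            by simp [HRC1.Prefers, instI33E, List.idxOf_cons]⟩
    · push_neg at hfree
      obtain ⟨res, hres⟩ := hfree
      rcases y_holder hm hres with ⟨i', r', rfl⟩ | rfl
      · exact absurd hres (hno i' r')
      · exact hres
  -- holder lemmas specialized
  have holder3 : ∀ res, M res = some (Hos3E.Hh i r 3) →
      res = Res3E.U i r 3 ∧ M (Res3E.U i r 2) = some (Hos3E.Hh i r 0) := by
    intro res hres
    rcases hh_holder hm hres with ⟨h0, _⟩ | ⟨h0, _⟩ | ⟨h0, _⟩ | ⟨h0, _⟩ |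
      ⟨_, h1, h2⟩ | ⟨h0, _⟩ | ⟨h0, _⟩ <;> first | (exact ⟨h1, h2⟩) | (exact absurd h0 (by decide))
  have holder2 : ∀ res, M res = some (Hos3E.Hh i r 2) →
      res = Res3E.U i r 2 ∧ M (Res3E.U i r 3) = some (Hos3E.Hh i r 1) := by
    intro res hres
    rcases hh_holder hm hres with ⟨h0, _⟩ | ⟨h0, _⟩ | ⟨h0, _⟩ | ⟨h0, _⟩ |
      ⟨h0, _⟩ | ⟨_, h1, h2⟩ | ⟨h0, _⟩ <;> first | (exact ⟨h1, h2⟩) | (exact absurd h0 (by decide))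
  have holder1 : ∀ res, M res = some (Hos3E.Hh i r 1) →
      (res = Res3E.U i r 1 ∧ M (Res3E.U i r 0) = some (Hos3E.Hh i r 0)) ∨
      (res = Res3E.U i r 3 ∧ M (Res3E.U i r 2) = some (Hos3E.Hh i r 2)) := by
    intro res hres
    rcases hh_holder hm hres with ⟨h0, _⟩ | ⟨h0, _⟩ | ⟨_, h1, h2⟩ | ⟨h0, _⟩ |
      ⟨h0, _⟩ | ⟨h0, _⟩ | ⟨_, h1, h2⟩ <;>
      first
        | (exact Or.inl ⟨h1, h2⟩)
        | (exact Or.inr ⟨h1, h2⟩)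
        | (exact absurd h0 (by decide))
  have holder0' : ∀ res, M res = some (Hos3E.Hh i r 0) →
      res = Res3E.U i r 4 ∨
      (res = Res3E.U i r 0 ∧ M (Res3E.U i r 1) = some (Hos3E.Hh i r 1)) ∨
      (res = Res3E.U i r 2 ∧ M (Res3E.U i r 3) = some (Hos3E.Hh i r 3)) := by
    intro res hres
    rcases hh_holder hm hres with ⟨_, h1⟩ | ⟨_, h1, h2⟩ | ⟨h0, _⟩ | ⟨_, h1, h2⟩ |
      ⟨h0, _⟩ | ⟨h0, _⟩ | ⟨h0, _⟩ <;>
      first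
        | (exact Or.inl h1)
        | (exact Or.inr (Or.inl ⟨h1, h2⟩))
        | (exact Or.inr (Or.inr ⟨h1, h2⟩))
        | (exact absurd h0 (by decide))
  have hny : ∀ k : Fin 4, M (Res3E.U i r 4) ≠ some (Hos3E.Hh i r k) := by
    intro k hk
    rw [my4] at hk
    simp at hk
  -- couple facts
  have hc1 : (M (Res3E.U i r 0) = none ∧ M (Res3E.U i r 1) = none) ∨
      (M (Res3E.U i r 0) = some (Hos3E.Hh i r 0) ∧
       M (Res3E.U i r 1) = some (Hos3E.Hh i r 1)) := by
    rcases hm.2.2.1 (Res3E.U i r 0, Res3E.U i r 1) (by simp [instI33E]) with h | ⟨hp, hhp, h1, h2⟩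
    · exact Or.inl h
    · simp [instI33E] at hhp
      subst hhp
      exact Or.inr ⟨h1, h2⟩
  have hc2 : (M (Res3E.U i r 2) = none ∧ M (Res3E.U i r 3) = none) ∨
      (M (Res3E.U i r 2) = some (Hos3E.Hh i r 0) ∧
       M (Res3E.U i r 3) = some (Hos3E.Hh i r 3)) ∨
      (M (Res3E.U i r 2) = some (Hos3E.Hh i r 2) ∧
       M (Res3E.U i r 3) = some (Hos3E.Hh i r 1)) := by
    rcases hm.2.2.1 (Res3E.U i r 2, Res3E.U i r 3) (by simp [instI33E]) with h | ⟨hp, hhp, h1, h2⟩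
    · exact Or.inl h
    · simp [instI33E] at hhp
      rcases hhp with rfl | rfl
      · exact Or.inr (Or.inl ⟨h1, h2⟩)
      · exact Or.inr (Or.inr ⟨h1, h2⟩)
  rcases hc2 with ⟨h2n, h3n⟩ | ⟨h2b, h3b⟩ | ⟨h2c, h3c⟩
  · -- case (a): couple (u2,u3) unmatched
    rcases hc1 with ⟨h0n, h1n⟩ | ⟨h0e, h1e⟩
    · -- everything free: block (u2,u3) with (Hh0, Hh3)
      apply hbc (Res3E.U i r 2, Res3E.U i r 3) (Hos3E.Hh i r 0, Hos3E.Hh i r 3)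
      refine ⟨by simp [instI33E], by simp [instI33E], Or.inl ⟨h2n, h3n⟩, ?_, ?_⟩
      · refine Or.inr (Or.inl ?_)
        intro res hres
        rcases holder0' res hres with rfl | ⟨rfl, _⟩ | ⟨rfl, _⟩ <;> simp_all
      · refine Or.inr (Or.inl ?_)
        intro res hres
        obtain ⟨rfl, _⟩ := holder3 res hres
        simp_all
    · -- (u0,u1) on (Hh0,Hh1): block (u2,u3) with (Hh2, Hh1)
      apply hbc (Res3E.U i r 2, Res3E.U i r 3) (Hos3E.Hh i r 2, Hos3E.Hh i r 1)
      refine ⟨by simp [instI33E], by simp [instI33E], Or.inl ⟨h2n, h3n⟩, ?_, ?_⟩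
      · refine Or.inr (Or.inl ?_)
        intro res hres
        obtain ⟨rfl, _⟩ := holder2 res hres
        simp_all
      · exact Or.inr (Or.inr ⟨_, h1e,
          by simp [HRC1.Prefers, instI33E, List.idxOf_cons]⟩)
  · -- case (b): (u2,u3) on (Hh0,Hh3): block (u0,u1) with (Hh0,Hh1)
    have hc1n : M (Res3E.U i r 0) = none ∧ M (Res3E.U i r 1) = none := by
      rcases hc1 with h | ⟨h0e, _⟩
      · exact h
      · have := hm.1 _ _ _ h0e h2b
        simp at this
    apply hbc (Res3E.U i r 0, Res3E.U i r 1) (Hos3E.Hh i r 0, Hos3E.Hh i r 1)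
    refine ⟨by simp [instI33E], by simp [instI33E], Or.inl hc1n, ?_, ?_⟩
    · exact Or.inr (Or.inr ⟨_, h2b,
        by simp [HRC1.Prefers, instI33E, List.idxOf_cons]⟩)
    · refine Or.inr (Or.inl ?_)
      intro res hres
      rcases holder1 res hres with ⟨rfl, _⟩ | ⟨rfl, hx⟩
      · simp_all
      · rw [h2b] at hx
        simp at hx
  · -- case (c): (u2,u3) on (Hh2,Hh1): block (u2,u3) with (Hh0,Hh3)
    apply hbc (Res3E.U i r 2, Res3E.U i r 3) (Hos3E.Hh i r 0, Hos3E.Hh i r 3)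
    refine ⟨by simp [instI33E], by simp [instI33E], ?_, ?_, ?_⟩
    · refine Or.inr ⟨(Hos3E.Hh i r 2, Hos3E.Hh i r 1), by simp [instI33E], h2c, h3c,
        by simp [HRC1.Prefers, instI33E, List.idxOf_cons]⟩
    · refine Or.inr (Or.inl ?_)
      intro res hres
      rcases holder0' res hres with rfl | ⟨rfl, hx⟩ | ⟨rfl, hx⟩
      · simp_all
      · have := hm.1 _ _ _ hx h3c
        simp at this
      · rw [h3c] at hx
        simp at hx
    · refine Or.inr (Or.inl ?_)
      intro res hres
      obtain ⟨rfl, hx⟩ := holder3 res hres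
      rw [h2c] at hx
      simp at hx
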